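/- If U is a finite normal subgroup of a group V, then for all v in V and u in U, the elements v^|U| and (vu)^|U| are conjugate by an element of U. -/

import Mathlib

open Function MulAction

private lemma affine_iterate {X : Type*} [Group X] (γ : MulAut X) (c : X) (k : ℕ) (t s : X) :
    (fun t => γ t * c)^[k] (t * s) = (γ ^ k) t * (fun t => γ t * c)^[k] s := by
  induction k generalizing t s with
  | zero => simp
  | succ k ih =>
    rw [Function.iterate_succ_apply, Function.iterate_succ_apply]
    show (fun t => γ t * c)^[k] (γ (t * s) * c)
        = (γ ^ (k + 1)) t * (fun t => γ t * c)^[k] (γ s * c)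
    rw [map_mul, mul_assoc, ih, pow_succ, MulAut.mul_apply]

private lemma affine_fixed {X : Type*} [Group X] [Fintype X] (γ : MulAut X) (c : X) :
    ∃ a : X, (fun t => γ t * c)^[Nat.card X] a = a := by
  classical
  set ψ : X → X := fun t => γ t * c with hψdef
  -- ψ as a permutation
  let σ : Equiv.Perm X := γ.toEquiv.trans (Equiv.mulRight c)
  have hσ : ψ = ⇑σ := rfl
  have hσk : ∀ k, ψ^[k] = ⇑(σ ^ k) := by
    intro k; rw [hσ, Equiv.Perm.iterate_eq_pow]
  -- every point is periodic
  have hper : ∀ x : X, x ∈ periodicPts ψ := by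
    intro x
    refine ⟨orderOf σ, orderOf_pos σ, ?_⟩
    show ψ^[orderOf σ] x = x
    rw [hσk, pow_orderOf_eq_one]; rfl
  -- pick a point of minimal period
  obtain ⟨a, -, hmin⟩ := Finset.exists_min_image Finset.univ
    (fun x => minimalPeriod ψ x) ⟨1, Finset.mem_univ 1⟩
  set m := minimalPeriod ψ a with hm
  have hmin' : ∀ x : X, m ≤ minimalPeriod ψ x := fun x => hmin x (Finset.mem_univ x)
  have hmpos : 0 < m := minimalPeriod_pos_of_mem_periodicPts (hper a)
  have haf : ψ^[m] a = a := isPeriodicPt_minimalPeriod ψ a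
  set cm : X := ψ^[m] 1 with hcm
  have h1 : ∀ x : X, ψ^[m] x = (γ ^ m) x * cm := by
    intro x
    have := affine_iterate γ c m x 1
    rwa [mul_one] at this
  have h2 : (γ ^ m) a = a * cm⁻¹ := by
    have := h1 a
    rw [haf] at this
    rw [eq_mul_inv_iff_mul_eq]
    exact this.symm
  -- the automorphism δ and the key identity
  set δ : MulAut X := MulAut.conj cm⁻¹ * γ ^ m with hδdef
  have hδ : ∀ x : X, δ x = cm⁻¹ * (γ ^ m) x * cm := by
    intro x
    simp [hδdef, MulAut.mul_apply, MulAut.conj_apply]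
  have hkey : ∀ x : X, δ (a⁻¹ * x) = a⁻¹ * ψ^[m] x := by
    intro x
    rw [hδ, map_mul, map_inv, h2, h1, mul_inv_rev, inv_inv]
    group
  -- fixed subgroup of δ
  set F : Subgroup X := MonoidHom.eqLocus (δ : X →* X) (MonoidHom.id X) with hFdef
  have hFmem : ∀ x : X, x ∈ F ↔ δ x = x := fun x => Iff.rfl
  -- the set of points of period dividing m
  set S := {x : X // ψ^[m] x = x} with hSdef
  have eSF : S ≃ F := by
    refine ⟨fun x => ⟨a⁻¹ * x.1, ?_⟩, fun t => ⟨a * t.1, ?_⟩, ?_, ?_⟩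
    · show δ (a⁻¹ * x.1) = a⁻¹ * x.1
      rw [hkey, x.2]
    · have h := hkey (a * t.1)
      rw [inv_mul_cancel_left] at h
      have ht : δ t.1 = t.1 := t.2
      rw [ht] at h
      have : a * t.1 = a * (a⁻¹ * ψ^[m] (a * t.1)) := by rw [← h]
      rw [mul_inv_cancel_left] at this
      exact this.symm
    · intro x; ext; simp
    · intro t; ext; simp
  -- the restriction of ψ to S is a permutation all of whose orbits have size m
  have hstep : ∀ x : S, ψ^[m] (ψ x.1) = ψ x.1 := by
    intro x
    rw [← Function.iterate_succ_apply, Function.iterate_succ_apply', x.2]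
  let ψS : S → S := fun x => ⟨ψ x.1, hstep x⟩
  have hψinj : Function.Injective ψ := by
    rw [hσ]; exact σ.injective
  have hψSinj : Function.Injective ψS := by
    intro x y h
    exact Subtype.ext (hψinj (congrArg Subtype.val h))
  let σS : Equiv.Perm S := Equiv.ofBijective ψS (Finite.injective_iff_bijective.mp hψSinj)
  have hσSval : ∀ (k : ℕ) (x : S), ((σS ^ k) x).1 = ψ^[k] x.1 := by
    intro k
    induction k with
    | zero => intro x; rfl
    | succ k ih =>
      intro x
      rw [pow_succ, Equiv.Perm.mul_apply, Function.iterate_succ_apply]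
      exact ih (σS x)
  have hperiodS : ∀ x : S, minimalPeriod (⇑σS) x = m := by
    intro x
    have hpm : IsPeriodicPt (⇑σS) m x := by
      show σS^[m] x = x
      apply Subtype.ext
      rw [Equiv.Perm.iterate_eq_pow, hσSval m x, x.2]
    refine le_antisymm (Nat.le_of_dvd hmpos hpm.minimalPeriod_dvd) ?_
    have hppos : 0 < minimalPeriod (⇑σS) x := hpm.minimalPeriod_pos hmpos
    have hfix : ψ^[minimalPeriod (⇑σS) x] x.1 = x.1 := by
      have := isPeriodicPt_minimalPeriod (⇑σS) x
      have h2 := congrArg Subtype.val this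
      rwa [Equiv.Perm.iterate_eq_pow, hσSval] at h2
    calc m ≤ minimalPeriod ψ x.1 := hmin' x.1
      _ ≤ minimalPeriod (⇑σS) x :=
          Nat.le_of_dvd hppos (IsPeriodicPt.minimalPeriod_dvd hfix)
  -- m divides the cardinality of S
  have hmS : m ∣ Nat.card S := by
    have hcongr := Nat.card_congr
      (selfEquivSigmaOrbits (Subgroup.zpowers σS) S)
    rw [hcongr]
    letI : Fintype S := Fintype.ofFinite S
    letI : Fintype (orbitRel.Quotient (Subgroup.zpowers σS) S) := Fintype.ofFinite _
    letI : ∀ ω : orbitRel.Quotient (Subgroup.zpowers σS) S,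
        Fintype (orbit (Subgroup.zpowers σS) ω.out) := fun ω => Fintype.ofFinite _
    rw [Nat.card_eq_fintype_card, Fintype.card_sigma]
    apply Finset.dvd_sum
    intro ω _
    have horb : Nat.card (orbit (Subgroup.zpowers σS) ω.out)
        = Nat.card (ZMod (minimalPeriod (σS • ·) ω.out)) :=
      Nat.card_congr (orbitZPowersEquiv σS ω.out)
    have hsmul : (σS • ·) = ⇑σS := rfl
    rw [hsmul, hperiodS] at horb
    rw [← Nat.card_eq_fintype_card, horb, Nat.card_zmod]
  -- m divides |X|
  have hmX : m ∣ Nat.card X := by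
    have h3 : Nat.card S = Nat.card F := Nat.card_congr eSF
    have h4 : Nat.card F ∣ Nat.card X := Subgroup.card_subgroup_dvd_card F
    exact (h3 ▸ hmS).trans h4
  exact ⟨a, (isPeriodicPt_iff_minimalPeriod_dvd.mpr hmX)⟩

theorem stmt_1 (V : Type*) [Group V] (U : Subgroup V) [U.Normal] [Fintype U]
    (v : V) (u : V) (hu : u ∈ U) :
    ∃ w ∈ U, (v * u) ^ (Nat.card U) = w⁻¹ * v ^ (Nat.card U) * w := by
  set n := Nat.card U with hn
  set γ : MulAut U := MulAut.conjNormal v⁻¹ with hγ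
  set c : U := ⟨u, hu⟩ with hc
  obtain ⟨a, ha⟩ := affine_fixed γ c
  set ψ : U → U := fun t => γ t * c with hψ
  have hiter : ∀ (k : ℕ) (t : U), ((ψ^[k] t : U) : V) = v⁻¹ ^ k * (t : V) * (v * u) ^ k := by
    intro k
    induction k with
    | zero => intro t; simp
    | succ k ih =>
      intro t
      rw [Function.iterate_succ_apply']
      have hstep : ((ψ (ψ^[k] t) : U) : V) = v⁻¹ * ((ψ^[k] t : U) : V) * v * u := by
        show ((γ (ψ^[k] t) * c : U) : V) = _
        push_cast
        rw [MulAut.conjNormal_apply]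
        simp [mul_assoc]
        rfl
      rw [hstep, ih t, pow_succ, pow_succ]
      group
  have hfix : ((a : U) : V) = v⁻¹ ^ n * (a : V) * (v * u) ^ n := by
    conv_lhs => rw [← ha]
    exact hiter n a
  refine ⟨(a : V), a.2, ?_⟩
  rw [inv_pow] at hfix
  have h5 : (v ^ n) * (a : V) = (a : V) * (v * u) ^ n := by
    nth_rewrite 1 [hfix]
    group
  rw [mul_assoc, h5, inv_mul_cancel_left]
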